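/- Let σ : ℝ² → M₂(ℝ) be a continuously differentiable matrix field that is ℤ²-periodic, takes symmetric values (σ₁₂ = σ₂₁), and is divergence-free in each row: ∂₁σ_{i1} + ∂₂σ_{i2} = 0 for i = 1,2. Then ∫_{[0,1]²} det σ(x) dx = det(∫_{[0,1]²} σ(x) dx), i.e. the average of det σ over the unit periodicity cell equals the determinant of the average stress. -/

import Mathlib

open MeasureTheory intervalIntegral Set

namespace Stmt17Aux

/-- First partial derivative. -/
noncomputable def d1 (f : ℝ × ℝ → ℝ) (p : ℝ × ℝ) : ℝ := fderiv ℝ f p (1, 0)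
/-- Second partial derivative. -/
noncomputable def d2 (f : ℝ × ℝ → ℝ) (p : ℝ × ℝ) : ℝ := fderiv ℝ f p (0, 1)

variable {f : ℝ × ℝ → ℝ}

lemma hasDerivAt_d1 (hf : ContDiff ℝ 1 f) (x y : ℝ) :
    HasDerivAt (fun s => f (s, y)) (d1 f (x, y)) x := by
  have h := (hf.differentiable one_ne_zero (x, y)).hasFDerivAt
  exact h.comp_hasDerivAt x (HasDerivAt.prodMk (hasDerivAt_id x) (hasDerivAt_const x y))

lemma hasDerivAt_d2 (hf : ContDiff ℝ 1 f) (x y : ℝ) :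
    HasDerivAt (fun t => f (x, t)) (d2 f (x, y)) y := by
  have h := (hf.differentiable one_ne_zero (x, y)).hasFDerivAt
  exact h.comp_hasDerivAt y (HasDerivAt.prodMk (hasDerivAt_const y x) (hasDerivAt_id y))

lemma cont_d1 (hf : ContDiff ℝ 1 f) : Continuous (d1 f) :=
  (hf.continuous_fderiv one_ne_zero).clm_apply continuous_const

lemma cont_d2 (hf : ContDiff ℝ 1 f) : Continuous (d2 f) :=
  (hf.continuous_fderiv one_ne_zero).clm_apply continuous_const

/-- FTC in the second variable. -/
lemma ftc2 (hf : ContDiff ℝ 1 f) (x a b : ℝ) :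
    ∫ t in a..b, d2 f (x, t) = f (x, b) - f (x, a) :=
  integral_eq_sub_of_hasDerivAt (fun t _ => hasDerivAt_d2 hf x t)
    (((cont_d2 hf).comp (continuous_const.prodMk continuous_id)).intervalIntegrable a b)

/-- FTC in the first variable. -/
lemma ftc1 (hf : ContDiff ℝ 1 f) (y a b : ℝ) :
    ∫ t in a..b, d1 f (t, y) = f (b, y) - f (a, y) :=
  integral_eq_sub_of_hasDerivAt (fun t _ => hasDerivAt_d1 hf t y)
    (((cont_d1 hf).comp (continuous_id.prodMk continuous_const)).intervalIntegrable a b)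

/-- Differentiation under the interval integral, in the first variable. -/
lemma param1 (hf : ContDiff ℝ 1 f) (a b x₀ : ℝ) :
    HasDerivAt (fun x => ∫ t in a..b, f (x, t)) (∫ t in a..b, d1 f (x₀, t)) x₀ := by
  obtain ⟨C, hC⟩ := (isCompact_Icc.prod isCompact_Icc :
      IsCompact (Icc (x₀ - 1) (x₀ + 1) ×ˢ Icc (min a b) (max a b))).exists_bound_of_continuousOn
    (cont_d1 hf).continuousOn
  refine (intervalIntegral.hasDerivAt_integral_of_dominated_loc_of_deriv_le
      (μ := volume) (a := a) (b := b) (F := fun x t => f (x, t))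
      (F' := fun x t => d1 f (x, t)) (x₀ := x₀) (bound := fun _ => C) (Metric.ball_mem_nhds x₀ one_pos)
      ?_ ?_ ?_ ?_ ?_ ?_).2
  · exact Filter.Eventually.of_forall fun x =>
      ((hf.continuous.comp (continuous_const.prodMk continuous_id)).aestronglyMeasurable)
  · exact ((hf.continuous.comp (continuous_const.prodMk continuous_id)).intervalIntegrable a b)
  · exact ((cont_d1 hf).comp (continuous_const.prodMk continuous_id)).aestronglyMeasurable
  · refine Filter.Eventually.of_forall fun t ht x hx => hC (x, t) ?_
    constructor
    · have := Metric.mem_ball.1 hx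
      rw [Real.dist_eq] at this
      constructor <;> [linarith [abs_le.1 this.le |>.1]; linarith [abs_le.1 this.le |>.2]]
    · exact uIoc_subset_uIcc ht
  · exact intervalIntegrable_const
  · exact Filter.Eventually.of_forall fun t _ x _ => hasDerivAt_d1 hf x t

/-- Differentiation under the interval integral, in the second variable. -/
lemma param2 (hf : ContDiff ℝ 1 f) (a b y₀ : ℝ) :
    HasDerivAt (fun y => ∫ t in a..b, f (t, y)) (∫ t in a..b, d2 f (t, y₀)) y₀ := by
  obtain ⟨C, hC⟩ := (isCompact_Icc.prod isCompact_Icc :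
      IsCompact (Icc (min a b) (max a b) ×ˢ Icc (y₀ - 1) (y₀ + 1))).exists_bound_of_continuousOn
    (cont_d2 hf).continuousOn
  refine (intervalIntegral.hasDerivAt_integral_of_dominated_loc_of_deriv_le
      (μ := volume) (a := a) (b := b) (F := fun y t => f (t, y))
      (F' := fun y t => d2 f (t, y)) (x₀ := y₀) (bound := fun _ => C) (Metric.ball_mem_nhds y₀ one_pos)
      ?_ ?_ ?_ ?_ ?_ ?_).2
  · exact Filter.Eventually.of_forall fun y =>
      ((hf.continuous.comp (continuous_id.prodMk continuous_const)).aestronglyMeasurable)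
  · exact ((hf.continuous.comp (continuous_id.prodMk continuous_const)).intervalIntegrable a b)
  · exact ((cont_d2 hf).comp (continuous_id.prodMk continuous_const)).aestronglyMeasurable
  · refine Filter.Eventually.of_forall fun t ht y hy => hC (t, y) ?_
    refine ⟨uIoc_subset_uIcc ht, ?_⟩
    have := Metric.mem_ball.1 hy
    rw [Real.dist_eq] at this
    constructor <;> [linarith [abs_le.1 this.le |>.1]; linarith [abs_le.1 this.le |>.2]]
  · exact intervalIntegrable_const
  · exact Filter.Eventually.of_forall fun t _ y _ => hasDerivAt_d2 hf t y

/-- A function with everywhere-zero derivative is constant. -/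
lemma const_of_deriv_zero {g h : ℝ → ℝ} (hg : ∀ x, HasDerivAt g (h x) x)
    (h0 : ∀ x, h x = 0) (x y : ℝ) : g x = g y :=
  is_const_of_deriv_eq_zero (fun x => (hg x).differentiableAt)
    (fun x => by rw [(hg x).deriv, h0]) x y

/-- Convert the set integral over the unit square to an iterated interval integral. -/
lemma sqIcc (f : ℝ × ℝ → ℝ) (hf : Continuous f) :
    ∫ p in Icc (0 : ℝ) 1 ×ˢ Icc (0 : ℝ) 1, f p =
      ∫ x in (0 : ℝ)..1, ∫ y in (0 : ℝ)..1, f (x, y) := by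
  have hint : IntegrableOn f (Icc (0 : ℝ) 1 ×ˢ Icc (0 : ℝ) 1) (volume.prod volume) := by
    rw [← Measure.volume_eq_prod]
    exact hf.continuousOn.integrableOn_compact (isCompact_Icc.prod isCompact_Icc)
  rw [Measure.volume_eq_prod, setIntegral_prod _ hint]
  simp only [integral_Icc_eq_integral_Ioc, intervalIntegral.integral_of_le zero_le_one]

/-- Fubini swap for iterated interval integrals of a continuous function. -/
lemma swapInt (f : ℝ × ℝ → ℝ) (hf : Continuous f) :
    ∫ x in (0 : ℝ)..1, ∫ y in (0 : ℝ)..1, f (x, y) =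
      ∫ y in (0 : ℝ)..1, ∫ x in (0 : ℝ)..1, f (x, y) := by
  have h1 : IntegrableOn f (Ioc (0 : ℝ) 1 ×ˢ Ioc (0 : ℝ) 1) (volume.prod volume) :=
    (by rw [← Measure.volume_eq_prod]
        exact hf.continuousOn.integrableOn_compact (isCompact_Icc.prod isCompact_Icc) :
      IntegrableOn f (Icc (0 : ℝ) 1 ×ˢ Icc (0 : ℝ) 1) (volume.prod volume)).mono_set
      (prod_mono Ioc_subset_Icc_self Ioc_subset_Icc_self)
  have h2 : Integrable (Function.uncurry fun x y => f (x, y))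
      ((volume.restrict (Ioc (0 : ℝ) 1)).prod (volume.restrict (Ioc (0 : ℝ) 1))) := by
    rw [Measure.prod_restrict]
    exact h1
  simp only [intervalIntegral.integral_of_le zero_le_one]
  exact integral_integral_swap h2

end Stmt17Aux

open Stmt17Aux

/-- For a `C¹`, `ℤ²`-periodic, symmetric-valued, row-wise
divergence-free stress field `σ` on `ℝ²` (components `σ i j : ℝ × ℝ → ℝ`),
the average of `det σ` over the unit cell `[0,1]²` equals the determinant of
the average stress (quasiaffinity of the determinant). -/
theorem stmt_17 (σ : Fin 2 → Fin 2 → ℝ × ℝ → ℝ)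
    (hsmooth : ∀ i j, ContDiff ℝ 1 (σ i j))
    (hsymm : ∀ x : ℝ × ℝ, σ 0 1 x = σ 1 0 x)
    (hper : ∀ i j, ∀ x : ℝ × ℝ, σ i j (x.1 + 1, x.2) = σ i j x ∧
      σ i j (x.1, x.2 + 1) = σ i j x)
    (hdiv : ∀ i, ∀ x : ℝ × ℝ,
      deriv (fun t => σ i 0 (t, x.2)) x.1 + deriv (fun t => σ i 1 (x.1, t)) x.2 = 0) :
    ∫ x in Set.Icc (0 : ℝ) 1 ×ˢ Set.Icc (0 : ℝ) 1,
        (σ 0 0 x * σ 1 1 x - σ 0 1 x * σ 1 0 x) =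
      (∫ x in Set.Icc (0 : ℝ) 1 ×ˢ Set.Icc (0 : ℝ) 1, σ 0 0 x) *
          (∫ x in Set.Icc (0 : ℝ) 1 ×ˢ Set.Icc (0 : ℝ) 1, σ 1 1 x) -
        (∫ x in Set.Icc (0 : ℝ) 1 ×ˢ Set.Icc (0 : ℝ) 1, σ 0 1 x) *
          (∫ x in Set.Icc (0 : ℝ) 1 ×ˢ Set.Icc (0 : ℝ) 1, σ 1 0 x) := by
  -- abbreviations
  have c00 := (hsmooth 0 0).continuous
  have c01 := (hsmooth 0 1).continuous
  have c10 := (hsmooth 1 0).continuous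
  have c11 := (hsmooth 1 1).continuous
  -- continuity of slices
  have crow : ∀ (f : ℝ × ℝ → ℝ), Continuous f → ∀ x : ℝ, Continuous fun t => f (x, t) :=
    fun f hf x => hf.comp (continuous_const.prodMk continuous_id)
  have ccol : ∀ (f : ℝ × ℝ → ℝ), Continuous f → ∀ y : ℝ, Continuous fun t => f (t, y) :=
    fun f hf y => hf.comp (continuous_id.prodMk continuous_const)
  -- divergence identities in terms of d1/d2
  have div0 : ∀ x y : ℝ, d1 (σ 0 0) (x, y) + d2 (σ 0 1) (x, y) = 0 := by
    intro x y
    have h := hdiv 0 (x, y)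
    rwa [(hasDerivAt_d1 (hsmooth 0 0) x y).deriv, (hasDerivAt_d2 (hsmooth 0 1) x y).deriv] at h
  have div1 : ∀ x y : ℝ, d1 (σ 1 0) (x, y) + d2 (σ 1 1) (x, y) = 0 := by
    intro x y
    have h := hdiv 1 (x, y)
    rwa [(hasDerivAt_d1 (hsmooth 1 0) x y).deriv, (hasDerivAt_d2 (hsmooth 1 1) x y).deriv] at h
  -- periodicity
  have perX : ∀ i j, ∀ y : ℝ, σ i j (1, y) = σ i j (0, y) := by
    intro i j y
    have := (hper i j (0, y)).1
    simpa using this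
  have perY : ∀ i j, ∀ x : ℝ, σ i j (x, 1) = σ i j (x, 0) := by
    intro i j x
    have := (hper i j (x, 0)).2
    simpa using this
  -- the stream-function primitive of the first row's first entry
  set G : ℝ → ℝ → ℝ := fun x y => ∫ t in (0 : ℝ)..y, σ 0 0 (x, t) with hG
  have hGy : ∀ x y : ℝ, HasDerivAt (G x) (σ 0 0 (x, y)) y := fun x y =>
    ((crow _ c00 x).integral_hasStrictDerivAt 0 y).hasDerivAt
  have hGx : ∀ y x : ℝ, HasDerivAt (fun u => G u y) (σ 0 1 (x, 0) - σ 0 1 (x, y)) x := by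
    intro y x
    have e : ∫ t in (0 : ℝ)..y, d1 (σ 0 0) (x, t) = σ 0 1 (x, 0) - σ 0 1 (x, y) := by
      rw [intervalIntegral.integral_congr
        (g := fun t => -(d2 (σ 0 1) (x, t))) (fun t _ => by
          show d1 (σ 0 0) (x, t) = -(d2 (σ 0 1) (x, t))
          linarith [div0 x t]),
        intervalIntegral.integral_neg, ftc2 (hsmooth 0 1) x 0 y]
      ring
    exact e ▸ param1 (hsmooth 0 0) 0 y x
  have hGper : ∀ y : ℝ, G 1 y = G 0 y := by
    intro y
    exact intervalIntegral.integral_congr fun t _ => perX 0 0 t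
  have contG : Continuous fun p : ℝ × ℝ => G p.1 p.2 := by
    exact intervalIntegral.continuous_parametric_intervalIntegral_of_continuous
      (f := fun (p : ℝ × ℝ) t => σ 0 0 (p.1, t))
      (c00.comp ((continuous_fst.comp continuous_fst).prodMk continuous_snd)) continuous_snd
  -- the four iterated integrals
  set IA := ∫ x in (0 : ℝ)..1, ∫ y in (0 : ℝ)..1, σ 0 0 (x, y) with hIA
  set IB := ∫ x in (0 : ℝ)..1, ∫ y in (0 : ℝ)..1, σ 0 1 (x, y) with hIB
  set IC := ∫ x in (0 : ℝ)..1, ∫ y in (0 : ℝ)..1, σ 1 0 (x, y) with hIC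
  set ID := ∫ x in (0 : ℝ)..1, ∫ y in (0 : ℝ)..1, σ 1 1 (x, y) with hID
  -- Step B : integration by parts in `y` for fixed `x`
  have stepB : ∀ x : ℝ, ∫ y in (0 : ℝ)..1, σ 0 0 (x, y) * σ 1 1 (x, y) =
      G x 1 * σ 1 1 (x, 1) + ∫ y in (0 : ℝ)..1, G x y * d1 (σ 1 0) (x, y) := by
    intro x
    have ibp := intervalIntegral.integral_mul_deriv_eq_deriv_mul (a := (0 : ℝ)) (b := 1)
      (u := G x) (u' := fun y => σ 0 0 (x, y))
      (v := fun y => σ 1 1 (x, y)) (v' := fun y => d2 (σ 1 1) (x, y))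
      (fun y _ => hGy x y) (fun y _ => hasDerivAt_d2 (hsmooth 1 1) x y)
      ((crow _ c00 x).intervalIntegrable 0 1)
      ((crow _ (cont_d2 (hsmooth 1 1)) x).intervalIntegrable 0 1)
    have hG0 : G x 0 = 0 := intervalIntegral.integral_same
    have e2 : ∫ y in (0 : ℝ)..1, G x y * d2 (σ 1 1) (x, y) =
        -∫ y in (0 : ℝ)..1, G x y * d1 (σ 1 0) (x, y) := by
      rw [← intervalIntegral.integral_neg]
      refine intervalIntegral.integral_congr fun y _ => ?_
      show G x y * d2 (σ 1 1) (x, y) = -(G x y * d1 (σ 1 0) (x, y))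
      have h : d2 (σ 1 1) (x, y) = -d1 (σ 1 0) (x, y) := by linarith [div1 x y]
      rw [h]; ring
    rw [e2, hG0] at ibp
    linarith
  -- Step C : integration by parts in `x` for fixed `y`
  have stepC : ∀ y : ℝ, ∫ x in (0 : ℝ)..1, G x y * d1 (σ 1 0) (x, y) =
      (∫ x in (0 : ℝ)..1, σ 0 1 (x, y) * σ 1 0 (x, y)) -
        ∫ x in (0 : ℝ)..1, σ 0 1 (x, 0) * σ 1 0 (x, y) := by
    intro y
    have ibp := intervalIntegral.integral_mul_deriv_eq_deriv_mul (a := (0 : ℝ)) (b := 1)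
      (u := fun u => G u y) (u' := fun x => σ 0 1 (x, 0) - σ 0 1 (x, y))
      (v := fun x => σ 1 0 (x, y)) (v' := fun x => d1 (σ 1 0) (x, y))
      (fun x _ => hGx y x) (fun x _ => hasDerivAt_d1 (hsmooth 1 0) x y)
      (((ccol _ c01 0).sub (ccol _ c01 y)).intervalIntegrable 0 1)
      ((ccol _ (cont_d1 (hsmooth 1 0)) y).intervalIntegrable 0 1)
    have hbd : G 1 y * σ 1 0 (1, y) - G 0 y * σ 1 0 (0, y) = 0 := by
      rw [hGper y, perX 1 0 y]; ring
    have esub : ∫ x in (0 : ℝ)..1, (σ 0 1 (x, 0) - σ 0 1 (x, y)) * σ 1 0 (x, y) =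
        (∫ x in (0 : ℝ)..1, σ 0 1 (x, 0) * σ 1 0 (x, y)) -
          ∫ x in (0 : ℝ)..1, σ 0 1 (x, y) * σ 1 0 (x, y) := by
      rw [← intervalIntegral.integral_sub
        (f := fun x => σ 0 1 (x, 0) * σ 1 0 (x, y)) (g := fun x => σ 0 1 (x, y) * σ 1 0 (x, y))
        (((ccol _ c01 0).mul (ccol _ c10 y)).intervalIntegrable 0 1)
        (((ccol _ c01 y).mul (ccol _ c10 y)).intervalIntegrable 0 1)]
      exact intervalIntegral.integral_congr fun x _ => by ring
    rw [esub] at ibp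
    linarith
  -- parametric continuity helpers
  have contP1 : ∀ F : ℝ × ℝ → ℝ, Continuous F →
      Continuous fun x => ∫ y in (0 : ℝ)..1, F (x, y) := fun F hF =>
    intervalIntegral.continuous_parametric_intervalIntegral_of_continuous'
      (f := fun x y => F (x, y)) (by exact hF) 0 1
  have contP2 : ∀ F : ℝ × ℝ → ℝ, Continuous F →
      Continuous fun y => ∫ x in (0 : ℝ)..1, F (x, y) := fun F hF =>
    intervalIntegral.continuous_parametric_intervalIntegral_of_continuous'
      (f := fun y x => F (x, y)) (hF.comp (continuous_snd.prodMk continuous_fst)) 0 1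
  -- continuity of the various integrands
  have contPhi : Continuous fun p : ℝ × ℝ => G p.1 p.2 * d1 (σ 1 0) p :=
    contG.mul (cont_d1 (hsmooth 1 0))
  have cont0011 : Continuous fun p : ℝ × ℝ => σ 0 0 p * σ 1 1 p := c00.mul c11
  have cont0110 : Continuous fun p : ℝ × ℝ => σ 0 1 p * σ 1 0 p := c01.mul c10
  have contB0 : Continuous fun p : ℝ × ℝ => σ 0 1 (p.1, 0) * σ 1 0 p :=
    (c01.comp (continuous_fst.prodMk continuous_const)).mul c10
  -- rewrite the goal as iterated interval integrals
  rw [sqIcc (fun p => σ 0 0 p * σ 1 1 p - σ 0 1 p * σ 1 0 p) (cont0011.sub cont0110), sqIcc _ c00, sqIcc _ c11, sqIcc _ c01, sqIcc _ c10,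
    ← hIA, ← hIB, ← hIC, ← hID]
  -- split the left-hand side
  have splitL : ∫ x in (0 : ℝ)..1, ∫ y in (0 : ℝ)..1,
      (σ 0 0 (x, y) * σ 1 1 (x, y) - σ 0 1 (x, y) * σ 1 0 (x, y)) =
      (∫ x in (0 : ℝ)..1, ∫ y in (0 : ℝ)..1, σ 0 0 (x, y) * σ 1 1 (x, y)) -
        ∫ x in (0 : ℝ)..1, ∫ y in (0 : ℝ)..1, σ 0 1 (x, y) * σ 1 0 (x, y) := by
    rw [← intervalIntegral.integral_sub
      ((contP1 _ cont0011).intervalIntegrable 0 1) ((contP1 _ cont0110).intervalIntegrable 0 1)]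
    refine intervalIntegral.integral_congr fun x _ => ?_
    exact intervalIntegral.integral_sub
      (((crow _ c00 x).mul (crow _ c11 x)).intervalIntegrable 0 1)
      (((crow _ c01 x).mul (crow _ c10 x)).intervalIntegrable 0 1)
  -- apply step B under the outer integral
  have hB : ∫ x in (0 : ℝ)..1, ∫ y in (0 : ℝ)..1, σ 0 0 (x, y) * σ 1 1 (x, y) =
      (∫ x in (0 : ℝ)..1, G x 1 * σ 1 1 (x, 1)) +
        ∫ x in (0 : ℝ)..1, ∫ y in (0 : ℝ)..1, G x y * d1 (σ 1 0) (x, y) := by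
    rw [intervalIntegral.integral_congr (fun x _ => stepB x)]
    exact intervalIntegral.integral_add
      (((contG.comp (continuous_id.prodMk continuous_const)).mul
        (ccol _ c11 1)).intervalIntegrable 0 1)
      ((contP1 _ contPhi).intervalIntegrable 0 1)
  -- apply step C after swapping, and swap back
  have hC2 : ∫ x in (0 : ℝ)..1, ∫ y in (0 : ℝ)..1, G x y * d1 (σ 1 0) (x, y) =
      (∫ x in (0 : ℝ)..1, ∫ y in (0 : ℝ)..1, σ 0 1 (x, y) * σ 1 0 (x, y)) -
        ∫ x in (0 : ℝ)..1, σ 0 1 (x, 0) * ∫ y in (0 : ℝ)..1, σ 1 0 (x, y) := by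
    rw [swapInt _ contPhi, intervalIntegral.integral_congr (fun y _ => stepC y),
      intervalIntegral.integral_sub ((contP2 _ cont0110).intervalIntegrable 0 1)
        ((contP2 _ contB0).intervalIntegrable 0 1),
      ← swapInt _ cont0110, ← swapInt _ contB0]
    congr 1
    refine intervalIntegral.integral_congr fun x _ => ?_
    exact intervalIntegral.integral_const_mul (σ 0 1 (x, 0)) fun y => σ 1 0 (x, y)
  -- constancy facts
  have K1 : ∀ x : ℝ, G x 1 = IA := by
    have hm : ∀ u v : ℝ, G u 1 = G v 1 :=
      const_of_deriv_zero (h := fun x => σ 0 1 (x, 0) - σ 0 1 (x, 1))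
        (fun x => hGx 1 x) (fun x => sub_eq_zero_of_eq (perY 0 1 x).symm)
    have hIA' : IA = G 0 1 := by
      rw [hIA, intervalIntegral.integral_congr (g := fun _ => G 0 1) (fun x _ => hm x 0)]
      simp
    exact fun x => by rw [hIA', hm x 0]
  have K2 : ∀ x : ℝ, (∫ y in (0 : ℝ)..1, σ 1 0 (x, y)) = IC := by
    have hq : ∀ x : ℝ, HasDerivAt (fun x => ∫ y in (0 : ℝ)..1, σ 1 0 (x, y))
        (σ 1 1 (x, 0) - σ 1 1 (x, 1)) x := by
      intro x
      have e : ∫ t in (0 : ℝ)..1, d1 (σ 1 0) (x, t) = σ 1 1 (x, 0) - σ 1 1 (x, 1) := by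
        rw [intervalIntegral.integral_congr
          (g := fun t => -(d2 (σ 1 1) (x, t))) (fun t _ => by
            show d1 (σ 1 0) (x, t) = -(d2 (σ 1 1) (x, t))
            linarith [div1 x t]),
          intervalIntegral.integral_neg, ftc2 (hsmooth 1 1) x 0 1]
        ring
      exact e ▸ param1 (hsmooth 1 0) 0 1 x
    have hm : ∀ u v : ℝ, (∫ y in (0 : ℝ)..1, σ 1 0 (u, y)) = ∫ y in (0 : ℝ)..1, σ 1 0 (v, y) :=
      const_of_deriv_zero hq (fun x => sub_eq_zero_of_eq (perY 1 1 x).symm)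
    have hIC' : IC = ∫ y in (0 : ℝ)..1, σ 1 0 (0, y) := by
      rw [hIC, intervalIntegral.integral_congr
        (g := fun _ => ∫ y in (0 : ℝ)..1, σ 1 0 (0, y)) (fun x _ => hm x 0)]
      simp
    exact fun x => by rw [hIC', hm x 0]
  have K3 : (∫ x in (0 : ℝ)..1, σ 1 1 (x, 1)) = ID := by
    have hn : ∀ y : ℝ, HasDerivAt (fun y => ∫ x in (0 : ℝ)..1, σ 1 1 (x, y))
        (σ 1 0 (0, y) - σ 1 0 (1, y)) y := by
      intro y
      have e : ∫ t in (0 : ℝ)..1, d2 (σ 1 1) (t, y) = σ 1 0 (0, y) - σ 1 0 (1, y) := by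
        rw [intervalIntegral.integral_congr
          (g := fun t => -(d1 (σ 1 0) (t, y))) (fun t _ => by
            show d2 (σ 1 1) (t, y) = -(d1 (σ 1 0) (t, y))
            linarith [div1 t y]),
          intervalIntegral.integral_neg, ftc1 (hsmooth 1 0) y 0 1]
        ring
      exact e ▸ param2 (hsmooth 1 1) 0 1 y
    have hm : ∀ u v : ℝ, (∫ x in (0 : ℝ)..1, σ 1 1 (x, u)) = ∫ x in (0 : ℝ)..1, σ 1 1 (x, v) :=
      const_of_deriv_zero hn (fun y => sub_eq_zero_of_eq (perX 1 0 y).symm)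
    have : ID = ∫ y in (0 : ℝ)..1, ∫ x in (0 : ℝ)..1, σ 1 1 (x, y) := by
      rw [hID, swapInt _ c11]
    rw [this, intervalIntegral.integral_congr
      (g := fun _ => ∫ x in (0 : ℝ)..1, σ 1 1 (x, 1)) (fun y _ => hm y 1)]
    simp
  have K4 : (∫ x in (0 : ℝ)..1, σ 0 1 (x, 0)) = IB := by
    have hr : ∀ y : ℝ, HasDerivAt (fun y => ∫ x in (0 : ℝ)..1, σ 0 1 (x, y))
        (σ 0 0 (0, y) - σ 0 0 (1, y)) y := by
      intro y
      have e : ∫ t in (0 : ℝ)..1, d2 (σ 0 1) (t, y) = σ 0 0 (0, y) - σ 0 0 (1, y) := by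
        rw [intervalIntegral.integral_congr
          (g := fun t => -(d1 (σ 0 0) (t, y))) (fun t _ => by
            show d2 (σ 0 1) (t, y) = -(d1 (σ 0 0) (t, y))
            linarith [div0 t y]),
          intervalIntegral.integral_neg, ftc1 (hsmooth 0 0) y 0 1]
        ring
      exact e ▸ param2 (hsmooth 0 1) 0 1 y
    have hm : ∀ u v : ℝ, (∫ x in (0 : ℝ)..1, σ 0 1 (x, u)) = ∫ x in (0 : ℝ)..1, σ 0 1 (x, v) :=
      const_of_deriv_zero hr (fun y => sub_eq_zero_of_eq (perX 0 0 y).symm)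
    have : IB = ∫ y in (0 : ℝ)..1, ∫ x in (0 : ℝ)..1, σ 0 1 (x, y) := by
      rw [hIB, swapInt _ c01]
    rw [this, intervalIntegral.integral_congr
      (g := fun _ => ∫ x in (0 : ℝ)..1, σ 0 1 (x, 0)) (fun y _ => hm y 0)]
    simp
  -- final assembly
  have T1eq : (∫ x in (0 : ℝ)..1, G x 1 * σ 1 1 (x, 1)) = IA * ID := by
    rw [intervalIntegral.integral_congr (g := fun x => IA * σ 1 1 (x, 1))
      (fun x _ => by rw [K1 x]), intervalIntegral.integral_const_mul, K3]
  have T4eq : (∫ x in (0 : ℝ)..1, σ 0 1 (x, 0) * ∫ y in (0 : ℝ)..1, σ 1 0 (x, y)) = IB * IC := by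
    rw [intervalIntegral.integral_congr (g := fun x => σ 0 1 (x, 0) * IC)
      (fun x _ => by rw [K2 x]), intervalIntegral.integral_mul_const, K4]
  rw [splitL, hB, hC2, T1eq, T4eq]
  ring
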